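/- Let T be a bounded operator on a complex Hilbert space H, w(T) = sup{|⟨Tx,x⟩| : ‖x‖=1} its numerical radius, and T* its adjoint. Then for every real r ≥ 1, w(T)^(2r) ≤ (1/2)·w(T²)^r + (1/2^(r+1))·‖T T* + T* T‖^r. -/

import Mathlib

open scoped InnerProductSpace
open ContinuousLinearMap
noncomputable section
set_option synthInstance.maxHeartbeats 1000000
set_option maxHeartbeats 1000000

variable {H : Type*} [NormedAddCommGroup H] [InnerProductSpace ℂ H] [CompleteSpace H]

/-- The numerical radius of a bounded operator. -/
noncomputable def numRadius (T : H →L[ℂ] H) : ℝ :=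
  sSup {r : ℝ | ∃ x : H, ‖x‖ = 1 ∧ r = ‖(⟪T x, x⟫_ℂ)‖}

/-- The 2×2 block operator [[X, Y],[Z, W]] on H ⊕ H (ℓ² direct sum). -/
noncomputable def blockOp (X Y Z W : H →L[ℂ] H) :
    WithLp 2 (H × H) →L[ℂ] WithLp 2 (H × H) :=
  ((WithLp.prodContinuousLinearEquiv 2 ℂ H H).symm.toContinuousLinearMap) ∘L
    ((X ∘L ContinuousLinearMap.fst ℂ H H + Y ∘L ContinuousLinearMap.snd ℂ H H).prod
      (Z ∘L ContinuousLinearMap.fst ℂ H H + W ∘L ContinuousLinearMap.snd ℂ H H)) ∘L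
    ((WithLp.prodContinuousLinearEquiv 2 ℂ H H).toContinuousLinearMap)


set_option linter.unusedSectionVars false

/-- Buzano's inequality. -/
lemma buzano (a b e : H) (he : ‖e‖ = 1) :
    2 * ‖(⟪a, e⟫_ℂ) * (⟪e, b⟫_ℂ)‖ ≤ ‖a‖ * ‖b‖ + ‖(⟪a, b⟫_ℂ)‖ := by
  set c : ℂ := ⟪e, b⟫_ℂ
  have hnorm : ‖(2 : ℂ) • (c • e) - b‖ = ‖b‖ := by
    have hsq : ‖(2 : ℂ) • (c • e) - b‖ ^ 2 = ‖b‖ ^ 2 := by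
      rw [@norm_sub_sq ℂ]
      have h1 : ‖(2 : ℂ) • (c • e)‖ ^ 2 = 4 * ‖c‖ ^ 2 := by
        simp [norm_smul, he]; ring
      have h2 : RCLike.re (⟪(2 : ℂ) • (c • e), b⟫_ℂ) = 2 * ‖c‖ ^ 2 := by
        rw [inner_smul_left, inner_smul_left]
        simp [map_ofNat, Complex.mul_conj', mul_comm, mul_assoc, Complex.mul_conj]
        norm_cast
        change c.re * c.re + c.im * c.im = ‖c‖ ^ 2
        rw [Complex.sq_norm, Complex.normSq_apply]
      rw [h1, h2]; ring
    calc ‖(2 : ℂ) • (c • e) - b‖ = Real.sqrt (‖(2 : ℂ) • (c • e) - b‖ ^ 2) :=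
          (Real.sqrt_sq (norm_nonneg _)).symm
      _ = Real.sqrt (‖b‖ ^ 2) := by rw [hsq]
      _ = ‖b‖ := Real.sqrt_sq (norm_nonneg _)
  have key : ‖2 * ((⟪a, e⟫_ℂ) * c) - (⟪a, b⟫_ℂ)‖ ≤ ‖a‖ * ‖b‖ := by
    have heq : 2 * ((⟪a, e⟫_ℂ) * c) - (⟪a, b⟫_ℂ) = ⟪a, (2 : ℂ) • (c • e) - b⟫_ℂ := by
      rw [inner_sub_right, inner_smul_right, inner_smul_right]; ring
    rw [heq]
    calc ‖(⟪a, (2 : ℂ) • (c • e) - b⟫_ℂ)‖ ≤ ‖a‖ * ‖(2 : ℂ) • (c • e) - b‖ :=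
          norm_inner_le_norm _ _
      _ = ‖a‖ * ‖b‖ := by rw [hnorm]
  calc 2 * ‖(⟪a, e⟫_ℂ) * c‖ = ‖2 * ((⟪a, e⟫_ℂ) * c)‖ := by
        rw [norm_mul]; norm_num
    _ = ‖(2 * ((⟪a, e⟫_ℂ) * c) - (⟪a, b⟫_ℂ)) + (⟪a, b⟫_ℂ)‖ := by rw [sub_add_cancel]
    _ ≤ ‖2 * ((⟪a, e⟫_ℂ) * c) - (⟪a, b⟫_ℂ)‖ + ‖(⟪a, b⟫_ℂ)‖ := norm_add_le _ _
    _ ≤ ‖a‖ * ‖b‖ + ‖(⟪a, b⟫_ℂ)‖ := by linarith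

set_option linter.unusedSectionVars false

lemma pointwise_bound (T : H →L[ℂ] H) (x : H) (hx : ‖x‖ = 1) :
    ‖(⟪T x, x⟫_ℂ)‖ ^ 2 ≤
      (1 / 2) * ‖(⟪(T ^ 2) x, x⟫_ℂ)‖ + (1 / 4) * ‖T * adjoint T + adjoint T * T‖ := by
  have h1 : (⟪x, adjoint T x⟫_ℂ) = ⟪T x, x⟫_ℂ := adjoint_inner_right T x x
  have hbuz := buzano (T x) (adjoint T x) x hx
  rw [h1] at hbuz
  have h2 : (⟪T x, adjoint T x⟫_ℂ) = ⟪(T ^ 2) x, x⟫_ℂ := by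
    rw [adjoint_inner_right]
    simp [pow_two, ContinuousLinearMap.mul_apply]
  rw [h2] at hbuz
  have hsq : ‖(⟪T x, x⟫_ℂ) * (⟪T x, x⟫_ℂ)‖ = ‖(⟪T x, x⟫_ℂ)‖ ^ 2 := by
    rw [norm_mul]; ring
  rw [hsq] at hbuz
  -- ‖Tx‖ * ‖T*x‖ ≤ (‖Tx‖² + ‖T*x‖²)/2 ≤ ‖TT* + T*T‖/2
  have hprod : ‖T x‖ * ‖adjoint T x‖ ≤ (‖T x‖ ^ 2 + ‖adjoint T x‖ ^ 2) / 2 := by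
    nlinarith [sq_nonneg (‖T x‖ - ‖adjoint T x‖)]
  have hsum : ‖T x‖ ^ 2 + ‖adjoint T x‖ ^ 2 ≤ ‖T * adjoint T + adjoint T * T‖ := by
    have he1 : (⟪(T * adjoint T + adjoint T * T) x, x⟫_ℂ)
        = (‖adjoint T x‖ : ℂ) ^ 2 + (‖T x‖ : ℂ) ^ 2 := by
      rw [ContinuousLinearMap.add_apply, inner_add_left]
      rw [ContinuousLinearMap.mul_apply, ContinuousLinearMap.mul_apply]
      rw [show (⟪T (adjoint T x), x⟫_ℂ) = ⟪adjoint T x, adjoint T x⟫_ℂ from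
        (adjoint_inner_right T (adjoint T x) x).symm]
      rw [show (⟪adjoint T (T x), x⟫_ℂ) = ⟪T x, T x⟫_ℂ from
        adjoint_inner_left T x (T x)]
      rw [inner_self_eq_norm_sq_to_K, inner_self_eq_norm_sq_to_K]
      norm_cast
    have : (‖adjoint T x‖ : ℝ) ^ 2 + ‖T x‖ ^ 2
        ≤ ‖(⟪(T * adjoint T + adjoint T * T) x, x⟫_ℂ)‖ := by
      rw [he1]
      have : ((‖adjoint T x‖ : ℂ) ^ 2 + (‖T x‖ : ℂ) ^ 2)
          = ((‖adjoint T x‖ ^ 2 + ‖T x‖ ^ 2 : ℝ) : ℂ) := by push_cast; ring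
      rw [this, Complex.norm_real]
      exact le_abs_self _
    calc ‖T x‖ ^ 2 + ‖adjoint T x‖ ^ 2
        ≤ ‖(⟪(T * adjoint T + adjoint T * T) x, x⟫_ℂ)‖ := by linarith
      _ ≤ ‖(T * adjoint T + adjoint T * T) x‖ * ‖x‖ := norm_inner_le_norm _ _
      _ ≤ ‖T * adjoint T + adjoint T * T‖ * ‖x‖ * ‖x‖ :=
          mul_le_mul_of_nonneg_right (le_opNorm _ _) (norm_nonneg _)
      _ = ‖T * adjoint T + adjoint T * T‖ := by rw [hx]; ring
  linarith

lemma mean2_rpow {a b r : ℝ} (ha : 0 ≤ a) (hb : 0 ≤ b) (hr : 1 ≤ r) :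
    ((a + b) / 2) ^ r ≤ (a ^ r + b ^ r) / 2 := by
  lift a to NNReal using ha
  lift b to NNReal using hb
  have h := NNReal.rpow_arith_mean_le_arith_mean2_rpow (1/2) (1/2) a b (by
    rw [← two_mul]; norm_num) hr
  have h' : ((((1:NNReal)/2) * a + (1/2) * b) ^ r : ℝ) ≤
      ((((1:NNReal)/2) * a ^ r + (1/2) * b ^ r : NNReal) : ℝ) := by exact_mod_cast h
  push_cast at h'
  have hbase : ((a:ℝ) + b) / 2 = (1:ℝ)/2 * a + 1/2 * b := by ring
  rw [hbase]
  linarith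

lemma numRadius_bddAbove (T : H →L[ℂ] H) :
    BddAbove {r : ℝ | ∃ x : H, ‖x‖ = 1 ∧ r = ‖(⟪T x, x⟫_ℂ)‖} := by
  refine ⟨‖T‖, fun s hs => ?_⟩
  obtain ⟨x, hx, rfl⟩ := hs
  calc ‖(⟪T x, x⟫_ℂ)‖ ≤ ‖T x‖ * ‖x‖ := norm_inner_le_norm _ _
    _ ≤ (‖T‖ * ‖x‖) * ‖x‖ := mul_le_mul_of_nonneg_right (T.le_opNorm x) (norm_nonneg _)
    _ = ‖T‖ := by rw [hx]; ring

theorem numRadius_pow_two_r_ineq (T : H →L[ℂ] H) (r : ℝ) (hr : 1 ≤ r) :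
    numRadius T ^ (2 * r) ≤
      (1 / 2) * numRadius (T ^ 2) ^ r +
        (1 / 2 ^ (r + 1)) * ‖T * adjoint T + adjoint T * T‖ ^ r := by
  have hrpos : (0:ℝ) < r := lt_of_lt_of_le one_pos hr
  have h2r : (0:ℝ) < 2 * r := by linarith
  set N : ℝ := ‖T * adjoint T + adjoint T * T‖ with hN
  have hNnn : 0 ≤ N := norm_nonneg _
  have hsplit : (1:ℝ) / 2 ^ (r + 1) = (1/2) * (1 / 2 ^ r) := by
    rw [Real.rpow_add (by norm_num : (0:ℝ) < 2), Real.rpow_one]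
    ring
  by_cases hH : ∃ x : H, ‖x‖ = 1
  · obtain ⟨x0, hx0⟩ := hH
    -- numRadius (T^2) facts
    have hmem2 : ∀ x : H, ‖x‖ = 1 → ‖(⟪(T ^ 2) x, x⟫_ℂ)‖ ≤ numRadius (T ^ 2) := fun x hx =>
      le_csSup (numRadius_bddAbove (T ^ 2)) ⟨x, hx, rfl⟩
    have hw2nn : 0 ≤ numRadius (T ^ 2) :=
      le_trans (norm_nonneg _) (hmem2 x0 hx0)
    set C : ℝ := (1 / 2) * numRadius (T ^ 2) ^ r + (1 / 2 ^ (r + 1)) * N ^ r with hC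
    have hCnn : 0 ≤ C := by
      have := Real.rpow_nonneg hw2nn r
      have := Real.rpow_nonneg hNnn r
      have : (0:ℝ) < 2 ^ (r + 1) := Real.rpow_pos_of_pos (by norm_num) _
      positivity
    -- each element of the sup-set satisfies s ^ (2r) ≤ C
    have key : ∀ x : H, ‖x‖ = 1 → ‖(⟪T x, x⟫_ℂ)‖ ^ (2 * r) ≤ C := by
      intro x hx
      have hpt := pointwise_bound T x hx
      set s : ℝ := ‖(⟪T x, x⟫_ℂ)‖ with hs
      set a : ℝ := ‖(⟪(T ^ 2) x, x⟫_ℂ)‖ with ha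
      have hsnn : 0 ≤ s := norm_nonneg _
      have hann : 0 ≤ a := norm_nonneg _
      have step1 : s ^ (2 * r) = (s ^ (2:ℕ)) ^ r := by
        rw [← Real.rpow_natCast s 2, ← Real.rpow_mul hsnn]
        norm_num
      rw [step1]
      rw [← hN] at hpt
      have hsq_le : s ^ (2:ℕ) ≤ (a + N / 2) / 2 := by
        push_cast
        linarith [hpt]
      calc (s ^ (2:ℕ)) ^ r ≤ ((a + N / 2) / 2) ^ r :=
            Real.rpow_le_rpow (by positivity) hsq_le (le_of_lt hrpos)
        _ ≤ (a ^ r + (N / 2) ^ r) / 2 := mean2_rpow hann (by positivity) hr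
        _ ≤ (numRadius (T ^ 2) ^ r + (N / 2) ^ r) / 2 := by
            have := Real.rpow_le_rpow hann (hmem2 x hx) (le_of_lt hrpos)
            linarith
        _ = C := by
            rw [Real.div_rpow hNnn (by norm_num : (0:ℝ) ≤ 2), hC, hsplit]
            ring
    -- conclude
    have hsupnn : 0 ≤ numRadius T :=
      le_trans (norm_nonneg _) (le_csSup (numRadius_bddAbove T) ⟨x0, hx0, rfl⟩)
    have hsup_le : numRadius T ≤ C ^ (1 / (2 * r)) := by
      have hne : Set.Nonempty {s : ℝ | ∃ x : H, ‖x‖ = 1 ∧ s = ‖(⟪T x, x⟫_ℂ)‖} :=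
        ⟨_, ⟨x0, hx0, rfl⟩⟩
      refine csSup_le hne ?_
      rintro s ⟨x, hx, rfl⟩
      have hk := key x hx
      have hsnn : (0:ℝ) ≤ ‖(⟪T x, x⟫_ℂ)‖ := norm_nonneg _
      calc ‖(⟪T x, x⟫_ℂ)‖ = (‖(⟪T x, x⟫_ℂ)‖ ^ (2 * r)) ^ (1 / (2 * r)) := by
            rw [← Real.rpow_mul hsnn, mul_one_div, div_self (ne_of_gt h2r), Real.rpow_one]
        _ ≤ C ^ (1 / (2 * r)) :=
            Real.rpow_le_rpow (Real.rpow_nonneg hsnn _) hk (by positivity)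
    calc numRadius T ^ (2 * r) ≤ (C ^ (1 / (2 * r))) ^ (2 * r) :=
          Real.rpow_le_rpow hsupnn hsup_le (le_of_lt h2r)
      _ = C := by
          rw [← Real.rpow_mul hCnn, one_div, inv_mul_cancel₀ (ne_of_gt h2r), Real.rpow_one]
  · -- no unit vectors: both sets are empty
    push_neg at hH
    have hempty : ∀ S : H →L[ℂ] H,
        {s : ℝ | ∃ x : H, ‖x‖ = 1 ∧ s = ‖(⟪S x, x⟫_ℂ)‖} = ∅ := by
      intro S; ext s
      simp only [Set.mem_setOf_eq, Set.mem_empty_iff_false, iff_false, not_exists]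
      rintro x ⟨hx, -⟩
      exact absurd hx (by simpa using hH x)
    have h1 : numRadius T = 0 := by rw [numRadius, hempty, Real.sSup_empty]
    have h2 : numRadius (T ^ 2) = 0 := by rw [numRadius, hempty, Real.sSup_empty]
    rw [h1, h2, Real.zero_rpow (ne_of_gt h2r), Real.zero_rpow (ne_of_gt hrpos)]
    have : (0:ℝ) < 2 ^ (r + 1) := Real.rpow_pos_of_pos (by norm_num) _
    have := Real.rpow_nonneg hNnn r
    positivity
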